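/- Let γ > 1 and t > 0. Let a : ℕ → [0,∞) with A := Σ_{i≥1} γ^{-i}·a_i < ∞, and let u_i : [0,t] → [0,∞), i ≥ 1, be nondecreasing functions such that u_i(s) ≤ a_i + ∫_0^s u_{i+1}(r) dr for every i ≥ 1 and s ∈ [0,t], and such that U(s) := Σ_{i≥1} γ^{-i}·u_i(s) is finite for every s ∈ [0,t]. Then U(t) ≤ A·e^{γ·t}. -/

import Mathlib

set_option maxHeartbeats 1000000 in
/-- Weighted Gronwall-type estimate: if `u_i : [0,t] → [0,∞)` (`i ≥ 1`) are nondecreasing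
with `u_i(s) ≤ a_i + ∫_0^s u_{i+1}(r) dr`, `A = Σ_{i≥1} γ^{-i} a_i < ∞`, and
`U(s) = Σ_{i≥1} γ^{-i} u_i(s)` is finite for every `s ∈ [0,t]`, then `U(t) ≤ A·e^{γt}`. -/
theorem weighted_gronwall (γ t : ℝ) (hγ : 1 < γ) (ht : 0 < t)
    (a : ℕ → ℝ) (ha : ∀ i : ℕ, 1 ≤ i → 0 ≤ a i)
    (u : ℕ → ℝ → ℝ)
    (hpos : ∀ i : ℕ, 1 ≤ i → ∀ s ∈ Set.Icc (0 : ℝ) t, 0 ≤ u i s)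
    (hmono : ∀ i : ℕ, 1 ≤ i → MonotoneOn (u i) (Set.Icc (0 : ℝ) t))
    (hineq : ∀ i : ℕ, 1 ≤ i → ∀ s ∈ Set.Icc (0 : ℝ) t,
      u i s ≤ a i + ∫ r in (0 : ℝ)..s, u (i + 1) r)
    (hA : Summable (fun i : ℕ => γ ^ (-((i : ℤ) + 1)) * a (i + 1)))
    (hU : ∀ s ∈ Set.Icc (0 : ℝ) t,
      Summable (fun i : ℕ => γ ^ (-((i : ℤ) + 1)) * u (i + 1) s)) :
    (∑' i : ℕ, γ ^ (-((i : ℤ) + 1)) * u (i + 1) t) ≤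
      (∑' i : ℕ, γ ^ (-((i : ℤ) + 1)) * a (i + 1)) * Real.exp (γ * t) := by
  have hγ0 : (0:ℝ) < γ := lt_trans one_pos hγ
  have hγne : γ ≠ 0 := ne_of_gt hγ0
  set w : ℕ → ℝ := fun i => γ ^ (-((i : ℤ) + 1)) with hw
  have hwpos : ∀ i, 0 < w i := fun i => zpow_pos hγ0 _
  have hwshift : ∀ k i : ℕ, w i = γ ^ (k:ℕ) * w (i + k) := by
    intro k i
    simp only [hw]
    rw [← zpow_natCast, ← zpow_add₀ hγne]
    push_cast
    ring_nf
  have htmem : t ∈ Set.Icc (0:ℝ) t := ⟨le_of_lt ht, le_refl t⟩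
  -- key iterated inequality
  have key : ∀ n : ℕ, ∀ i : ℕ, ∀ s ∈ Set.Icc (0:ℝ) t,
      u (i+1) s ≤ (∑ k ∈ Finset.range n, a (i+1+k) * s^k / (Nat.factorial k))
        + u (i+1+n) t * (s^n / (Nat.factorial n)) := by
    intro n
    induction n with
    | zero =>
      intro i s hs
      simp only [Finset.range_zero, Finset.sum_empty, pow_zero, Nat.factorial_zero,
        Nat.cast_one, Nat.add_zero, zero_add]
      have := hmono (i+1) (by omega) hs htmem hs.2
      simpa using this
    | succ n ih =>
      intro i s hs
      have h1 : u (i+1) s ≤ a (i+1) + ∫ r in (0:ℝ)..s, u (i+2) r :=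
        hineq (i+1) (by omega) s hs
      have hIcc : Set.Icc (0:ℝ) s ⊆ Set.Icc (0:ℝ) t :=
        Set.Icc_subset_Icc le_rfl hs.2
      have hintu : IntervalIntegrable (u (i+2)) MeasureTheory.volume 0 s := by
        apply MonotoneOn.intervalIntegrable
        have : Set.uIcc (0:ℝ) s = Set.Icc 0 s := Set.uIcc_of_le hs.1
        rw [this]
        exact (hmono (i+2) (by omega)).mono hIcc
      have hint1 : IntervalIntegrable
          (fun r:ℝ => ∑ k ∈ Finset.range n, a (i+2+k) * r^k / (Nat.factorial k))
          MeasureTheory.volume 0 s :=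
        (continuous_finset_sum _ (fun k _ =>
          (continuous_const.mul (continuous_pow k)).div_const _)).intervalIntegrable 0 s
      have hint2 : IntervalIntegrable
          (fun r:ℝ => u (i+2+n) t * (r^n / (Nat.factorial n)))
          MeasureTheory.volume 0 s :=
        (continuous_const.mul ((continuous_pow n).div_const _)).intervalIntegrable 0 s
      have hintg : IntervalIntegrable
          (fun r:ℝ => (∑ k ∈ Finset.range n, a (i+2+k) * r^k / (Nat.factorial k))
            + u (i+2+n) t * (r^n / (Nat.factorial n)))
          MeasureTheory.volume 0 s := hint1.add hint2
      have h2 : (∫ r in (0:ℝ)..s, u (i+2) r)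
          ≤ ∫ r in (0:ℝ)..s, ((∑ k ∈ Finset.range n, a (i+2+k) * r^k / (Nat.factorial k))
            + u (i+2+n) t * (r^n / (Nat.factorial n))) := by
        apply intervalIntegral.integral_mono_on hs.1 hintu hintg
        intro r hr
        have := ih (i+1) r (hIcc hr)
        convert this using 3 <;> omega
      have hterm : ∀ k : ℕ, ∀ c : ℝ,
          (∫ r in (0:ℝ)..s, c * r^k / (Nat.factorial k))
            = c * s^(k+1) / (Nat.factorial (k+1)) := by
        intro k c
        have heq : (fun r : ℝ => c * r^k / (Nat.factorial k))
            = fun r : ℝ => (c / (Nat.factorial k)) * r^k := by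
          funext r; ring
        have hk : ((Nat.factorial (k+1) : ℝ)) = ((k:ℝ)+1) * (Nat.factorial k) := by
          rw [Nat.factorial_succ]; push_cast; ring
        rw [heq, intervalIntegral.integral_const_mul, integral_pow,
          zero_pow (Nat.succ_ne_zero k), sub_zero, hk, div_mul_div_comm,
          mul_comm ((Nat.factorial k : ℝ)) ((k:ℝ)+1)]
      have hintgval : (∫ r in (0:ℝ)..s,
            ((∑ k ∈ Finset.range n, a (i+2+k) * r^k / (Nat.factorial k))
              + u (i+2+n) t * (r^n / (Nat.factorial n))))
          = (∑ k ∈ Finset.range n, a (i+2+k) * s^(k+1) / (Nat.factorial (k+1)))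
            + u (i+2+n) t * (s^(n+1) / (Nat.factorial (n+1))) := by
        rw [intervalIntegral.integral_add hint1 hint2,
          intervalIntegral.integral_finset_sum (f := fun k r => a (i+2+k) * r^k / (Nat.factorial k)) (fun k _ =>
            ((continuous_const.mul (continuous_pow k)).div_const _).intervalIntegrable 0 s)]
        congr 1
        · exact Finset.sum_congr rfl fun k _ => hterm k _
        · have h' : (fun r:ℝ => u (i+2+n) t * (r^n / (Nat.factorial n)))
              = fun r:ℝ => u (i+2+n) t * r^n / (Nat.factorial n) := by
            funext r; ring
          rw [h', hterm n (u (i+2+n) t)]; ring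
      have hre : a (i+1) + (∑ k ∈ Finset.range n, a (i+2+k) * s^(k+1) / (Nat.factorial (k+1)))
          = ∑ k ∈ Finset.range (n+1), a (i+1+k) * s^k / (Nat.factorial k) := by
        rw [Finset.sum_range_succ']
        simp only [pow_zero, Nat.factorial_zero, Nat.cast_one, Nat.add_zero]
        have hix : ∀ k, a (i+1+(k+1)) = a (i+2+k) := fun k => by ring_nf
        rw [add_comm]
        congr 1
        · exact Finset.sum_congr rfl fun k _ => by rw [hix k]
        · simp
      calc u (i+1) s ≤ a (i+1) + ∫ r in (0:ℝ)..s, u (i+2) r := h1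
        _ ≤ a (i+1) + ∫ r in (0:ℝ)..s,
              ((∑ k ∈ Finset.range n, a (i+2+k) * r^k / (Nat.factorial k))
                + u (i+2+n) t * (r^n / (Nat.factorial n))) := by linarith
        _ = ∑ k ∈ Finset.range (n+1), a (i+1+k) * s^k / (Nat.factorial k)
              + u (i+1+(n+1)) t * (s^(n+1) / (Nat.factorial (n+1))) := by
            rw [hintgval, ← add_assoc, hre]
            congr 3
            omega
  -- summability facts
  have hUt : Summable (fun i : ℕ => w i * u (i+1) t) := hU t htmem
  have hwa_nonneg : ∀ i, 0 ≤ w i * a (i+1) :=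
    fun i => mul_nonneg (hwpos i).le (ha (i+1) (by omega))
  have hwu_nonneg : ∀ i, 0 ≤ w i * u (i+1) t :=
    fun i => mul_nonneg (hwpos i).le (hpos (i+1) (by omega) t htmem)
  have hA0 : 0 ≤ ∑' i, w i * a (i+1) := tsum_nonneg hwa_nonneg
  set A := ∑' i, w i * a (i+1) with hAdef
  set Ut := ∑' i, w i * u (i+1) t with hUtdef
  -- shifted summabilities
  have hsummA : ∀ k : ℕ, Summable (fun i : ℕ => w i * a (i+1+k)) := by
    intro k
    have h1 : Summable (fun i : ℕ => w (i+k) * a (i+k+1)) :=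
      (summable_nat_add_iff k).2 hA
    have h2 := h1.mul_left (γ ^ (k:ℕ))
    apply h2.congr
    intro i
    have e : i + k + 1 = i + 1 + k := by omega
    rw [← mul_assoc, ← hwshift k i, e]
  have htailA : ∀ k : ℕ, (∑' i, w i * a (i+1+k)) ≤ γ^(k:ℕ) * A := by
    intro k
    have h1 : Summable (fun i : ℕ => w (i+k) * a (i+k+1)) :=
      (summable_nat_add_iff k).2 hA
    have heq : (∑' i, w i * a (i+1+k)) = γ^(k:ℕ) * ∑' i, w (i+k) * a (i+k+1) := by
      rw [← tsum_mul_left]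
      apply tsum_congr
      intro i
      have e : i + 1 + k = i + k + 1 := by omega
      rw [← mul_assoc, ← hwshift k i, e]
    rw [heq]
    have htail : (∑' i, w (i+k) * a (i+k+1)) ≤ A := by
      have := Summable.sum_add_tsum_nat_add (f := fun i => w i * a (i+1)) k hA
      have hfin : 0 ≤ ∑ i ∈ Finset.range k, w i * a (i+1) :=
        Finset.sum_nonneg fun i _ => hwa_nonneg i
      have heq2 : (∑' i, w (i+k) * a (i+k+1)) = ∑' i, w (i+k) * a ((i+k)+1) := rfl
      rw [heq2]
      linarith [this]
    have : (0:ℝ) ≤ γ^(k:ℕ) := by positivity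
    exact mul_le_mul_of_nonneg_left htail this
  have hsummU : ∀ n : ℕ, Summable (fun i : ℕ => w i * u (i+1+n) t) := by
    intro n
    have h1 : Summable (fun i : ℕ => w (i+n) * u (i+n+1) t) :=
      (summable_nat_add_iff n).2 hUt
    have h2 := h1.mul_left (γ ^ (n:ℕ))
    apply h2.congr
    intro i
    have e : i + n + 1 = i + 1 + n := by omega
    rw [← mul_assoc, ← hwshift n i, e]
  have htailU : ∀ n : ℕ, (∑' i, w i * u (i+1+n) t) ≤ γ^(n:ℕ) * Ut := by
    intro n
    have h1 : Summable (fun i : ℕ => w (i+n) * u (i+n+1) t) :=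
      (summable_nat_add_iff n).2 hUt
    have heq : (∑' i, w i * u (i+1+n) t) = γ^(n:ℕ) * ∑' i, w (i+n) * u (i+n+1) t := by
      rw [← tsum_mul_left]
      apply tsum_congr
      intro i
      have e : i + 1 + n = i + n + 1 := by omega
      rw [← mul_assoc, ← hwshift n i, e]
    rw [heq]
    have htail : (∑' i, w (i+n) * u (i+n+1) t) ≤ Ut := by
      have := Summable.sum_add_tsum_nat_add (f := fun i => w i * u (i+1) t) n hUt
      have hfin : 0 ≤ ∑ i ∈ Finset.range n, w i * u (i+1) t :=
        Finset.sum_nonneg fun i _ => hwu_nonneg i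
      linarith [this]
    have : (0:ℝ) ≤ γ^(n:ℕ) := by positivity
    exact mul_le_mul_of_nonneg_left htail this
  -- main bound for each n
  have main : ∀ n : ℕ, Ut ≤ A * Real.exp (γ * t) + (γ*t)^n / (Nat.factorial n) * Ut := by
    intro n
    -- RHS function
    set F : ℕ → ℝ := fun i =>
      (∑ k ∈ Finset.range n, w i * (a (i+1+k) * t^k / (Nat.factorial k)))
        + w i * (u (i+1+n) t * (t^n / (Nat.factorial n))) with hF
    have hsumF1 : ∀ k ∈ Finset.range n,
        Summable (fun i : ℕ => w i * (a (i+1+k) * t^k / (Nat.factorial k))) := by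
      intro k _
      have := (hsummA k).mul_right (t^k / (Nat.factorial k))
      apply this.congr
      intro i; ring
    have hsumF2 : Summable (fun i : ℕ => w i * (u (i+1+n) t * (t^n / (Nat.factorial n)))) := by
      have := (hsummU n).mul_right (t^n / (Nat.factorial n))
      apply this.congr
      intro i; ring
    have hsumF : Summable F := by
      apply Summable.add _ hsumF2
      exact summable_sum fun k hk => hsumF1 k hk
    have step1 : Ut ≤ ∑' i, F i := by
      apply Summable.tsum_le_tsum _ hUt hsumF
      intro i
      have := key n i t htmem
      calc w i * u (i+1) t
          ≤ w i * ((∑ k ∈ Finset.range n, a (i+1+k) * t^k / (Nat.factorial k))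
            + u (i+1+n) t * (t^n / (Nat.factorial n))) :=
            mul_le_mul_of_nonneg_left this (hwpos i).le
        _ = F i := by rw [hF, mul_add, Finset.mul_sum]
    have step2 : (∑' i, F i) = (∑ k ∈ Finset.range n, ∑' i : ℕ,
          w i * (a (i+1+k) * t^k / (Nat.factorial k)))
        + ∑' i : ℕ, w i * (u (i+1+n) t * (t^n / (Nat.factorial n))) := by
      rw [hF, Summable.tsum_add (summable_sum fun k hk => hsumF1 k hk) hsumF2,
        Summable.tsum_finsetSum fun k hk => hsumF1 k hk]
    have step3 : ∀ k ∈ Finset.range n,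
        (∑' i : ℕ, w i * (a (i+1+k) * t^k / (Nat.factorial k)))
          ≤ γ^(k:ℕ) * A * (t^k / (Nat.factorial k)) := by
      intro k _
      have heq : (∑' i : ℕ, w i * (a (i+1+k) * t^k / (Nat.factorial k)))
          = (∑' i : ℕ, w i * a (i+1+k)) * (t^k / (Nat.factorial k)) := by
        rw [← tsum_mul_right]
        apply tsum_congr; intro i; ring
      rw [heq]
      have hnn : (0:ℝ) ≤ t^k / (Nat.factorial k) := by positivity
      exact mul_le_mul_of_nonneg_right (htailA k) hnn
    have step4 : (∑' i : ℕ, w i * (u (i+1+n) t * (t^n / (Nat.factorial n))))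
        ≤ (γ*t)^n / (Nat.factorial n) * Ut := by
      have heq : (∑' i : ℕ, w i * (u (i+1+n) t * (t^n / (Nat.factorial n))))
          = (∑' i : ℕ, w i * u (i+1+n) t) * (t^n / (Nat.factorial n)) := by
        rw [← tsum_mul_right]
        apply tsum_congr; intro i; ring
      rw [heq]
      have hnn : (0:ℝ) ≤ t^n / (Nat.factorial n) := by positivity
      calc (∑' i : ℕ, w i * u (i+1+n) t) * (t^n / (Nat.factorial n))
          ≤ (γ^(n:ℕ) * Ut) * (t^n / (Nat.factorial n)) :=
            mul_le_mul_of_nonneg_right (htailU n) hnn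
        _ = (γ*t)^n / (Nat.factorial n) * Ut := by rw [mul_pow]; ring
    have step5 : (∑ k ∈ Finset.range n, γ^(k:ℕ) * A * (t^k / (Nat.factorial k)))
        ≤ A * Real.exp (γ * t) := by
      have heq : (∑ k ∈ Finset.range n, γ^(k:ℕ) * A * (t^k / (Nat.factorial k)))
          = A * ∑ k ∈ Finset.range n, (γ*t)^k / (Nat.factorial k) := by
        rw [Finset.mul_sum]
        apply Finset.sum_congr rfl
        intro k _
        rw [mul_pow]; ring
      rw [heq]
      have hexp := Real.sum_le_exp_of_nonneg (x := γ*t) (by positivity) n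
      exact mul_le_mul_of_nonneg_left hexp hA0
    calc Ut ≤ ∑' i, F i := step1
      _ = _ + _ := step2
      _ ≤ (∑ k ∈ Finset.range n, γ^(k:ℕ) * A * (t^k / (Nat.factorial k)))
            + (γ*t)^n / (Nat.factorial n) * Ut := by
          exact add_le_add (Finset.sum_le_sum step3) step4
      _ ≤ A * Real.exp (γ * t) + (γ*t)^n / (Nat.factorial n) * Ut := by linarith [step5]
  -- take the limit n → ∞
  have hlim : Filter.Tendsto (fun n : ℕ => A * Real.exp (γ * t) + (γ*t)^n / (Nat.factorial n) * Ut)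
      Filter.atTop (nhds (A * Real.exp (γ * t))) := by
    have h1 : Filter.Tendsto (fun n : ℕ => (γ*t)^n / (Nat.factorial n)) Filter.atTop (nhds 0) :=
      FloorSemiring.tendsto_pow_div_factorial_atTop (γ*t)
    have h2 := h1.mul_const Ut
    rw [zero_mul] at h2
    have h3 := (tendsto_const_nhds (x := A * Real.exp (γ * t)) (f := Filter.atTop (α := ℕ))).add h2
    simpa using h3
  exact ge_of_tendsto hlim (Filter.Eventually.of_forall main)
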